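/- With binary regressor T_i ∈ {0,1}, T̄ = N₁/N, OLS residuals ε̂_i as above, the Huber–White heteroskedasticity-robust variance estimator satisfies the exact identity V̂_{HW} = Σ_{i=1}^N ε̂_i²(T_i − T̄)² / {Σ_{i=1}^N (T_i − T̄)²}² = (s₁²/N₁)·((N₁−1)/N₁) + (s₀²/N₀)·((N₀−1)/N₀), where s_t² is the sample variance of Y_i^{obs} in group t with denominator N_t − 1. -/

import Mathlib

open Finset

/-- With a binary regressor (treated set `A`, `N₁ ≥ 2` treated and
`N₀ ≥ 2` control units), `T̄ = N₁/N`, and OLS residuals `ε̂ᵢ`, the Huber–White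
heteroskedasticity-robust variance estimator satisfies the exact identity
`V̂_HW = Σ ε̂ᵢ²(Tᵢ − T̄)² / {Σ (Tᵢ − T̄)²}²
      = (s₁²/N₁)((N₁−1)/N₁) + (s₀²/N₀)((N₀−1)/N₀)`. -/
theorem stmt13 (N N₁ N₀ : ℕ) (A : Finset (Fin N)) (hA : A.card = N₁)
    (h1 : 2 ≤ N₁) (hN₀ : N₀ = N - N₁) (h0 : 2 ≤ N₀) (y : Fin N → ℝ)
    (ybar1 ybar0 s1sq s0sq Tbar : ℝ)
    (hybar1 : ybar1 = (∑ i ∈ A, y i) / (N₁ : ℝ))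
    (hybar0 : ybar0 = (∑ i ∈ Aᶜ, y i) / (N₀ : ℝ))
    (hs1 : s1sq = (∑ i ∈ A, (y i - ybar1) ^ 2) / ((N₁ : ℝ) - 1))
    (hs0 : s0sq = (∑ i ∈ Aᶜ, (y i - ybar0) ^ 2) / ((N₀ : ℝ) - 1))
    (hTbar : Tbar = (N₁ : ℝ) / (N : ℝ)) :
    (∑ i, (y i - if i ∈ A then ybar1 else ybar0) ^ 2
        * ((if i ∈ A then (1 : ℝ) else 0) - Tbar) ^ 2)
      / (∑ i, ((if i ∈ A then (1 : ℝ) else 0) - Tbar) ^ 2) ^ 2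
      = s1sq / (N₁ : ℝ) * (((N₁ : ℝ) - 1) / (N₁ : ℝ))
        + s0sq / (N₀ : ℝ) * (((N₀ : ℝ) - 1) / (N₀ : ℝ)) := by
  have hle : N₁ ≤ N := by
    have := A.card_le_univ
    simpa [hA] using this
  have hNs : N = N₁ + N₀ := by omega
  have hAc : Aᶜ.card = N₀ := by
    simp [Finset.card_compl, hA, hN₀]
  have ha : (0:ℝ) < (N₁:ℝ) := by exact_mod_cast (by omega : 0 < N₁)
  have hb : (0:ℝ) < (N₀:ℝ) := by exact_mod_cast (by omega : 0 < N₀)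
  have ha1 : (N₁:ℝ) - 1 ≠ 0 := by
    have h : (1:ℝ) < (N₁:ℝ) := by exact_mod_cast (by omega : 1 < N₁)
    linarith
  have hb1 : (N₀:ℝ) - 1 ≠ 0 := by
    have h : (1:ℝ) < (N₀:ℝ) := by exact_mod_cast (by omega : 1 < N₀)
    linarith
  have hNr : (N:ℝ) = (N₁:ℝ) + (N₀:ℝ) := by exact_mod_cast hNs
  have hT : Tbar = (N₁:ℝ) / ((N₁:ℝ) + (N₀:ℝ)) := by rw [hTbar, hNr]
  set S1 := ∑ i ∈ A, (y i - ybar1) ^ 2 with hS1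
  set S0 := ∑ i ∈ Aᶜ, (y i - ybar0) ^ 2 with hS0
  have e1 : ∑ i ∈ A, ((y i - if i ∈ A then ybar1 else ybar0) ^ 2
      * ((if i ∈ A then (1 : ℝ) else 0) - Tbar) ^ 2)
      = ∑ i ∈ A, (y i - ybar1) ^ 2 * (1 - Tbar) ^ 2 :=
    Finset.sum_congr rfl fun i hi => by rw [if_pos hi, if_pos hi]
  have e0 : ∑ i ∈ Aᶜ, ((y i - if i ∈ A then ybar1 else ybar0) ^ 2
      * ((if i ∈ A then (1 : ℝ) else 0) - Tbar) ^ 2)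
      = ∑ i ∈ Aᶜ, (y i - ybar0) ^ 2 * (0 - Tbar) ^ 2 :=
    Finset.sum_congr rfl fun i hi => by
      rw [if_neg (Finset.mem_compl.mp hi), if_neg (Finset.mem_compl.mp hi)]
  have d1 : ∑ i ∈ A, ((if i ∈ A then (1 : ℝ) else 0) - Tbar) ^ 2
      = ∑ i ∈ A, ((1:ℝ) - Tbar) ^ 2 :=
    Finset.sum_congr rfl fun i hi => by rw [if_pos hi]
  have d0 : ∑ i ∈ Aᶜ, ((if i ∈ A then (1 : ℝ) else 0) - Tbar) ^ 2
      = ∑ i ∈ Aᶜ, ((0:ℝ) - Tbar) ^ 2 :=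
    Finset.sum_congr rfl fun i hi => by rw [if_neg (Finset.mem_compl.mp hi)]
  have hnum : (∑ i, (y i - if i ∈ A then ybar1 else ybar0) ^ 2
      * ((if i ∈ A then (1 : ℝ) else 0) - Tbar) ^ 2)
      = S1 * (1 - Tbar) ^ 2 + S0 * (0 - Tbar) ^ 2 := by
    rw [← Finset.sum_add_sum_compl A, e1, e0, ← Finset.sum_mul, ← Finset.sum_mul]
  have hden : (∑ i, ((if i ∈ A then (1 : ℝ) else 0) - Tbar) ^ 2)
      = (N₁:ℝ) * (1 - Tbar) ^ 2 + (N₀:ℝ) * (0 - Tbar) ^ 2 := by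
    rw [← Finset.sum_add_sum_compl A, d1, d0, Finset.sum_const, Finset.sum_const,
      hA, hAc, nsmul_eq_mul, nsmul_eq_mul]
  rw [hnum, hden, hs1, hs0, hT]
  have hab : (N₁:ℝ) + (N₀:ℝ) ≠ 0 := by positivity
  have hN1ne : (N₁:ℝ) ≠ 0 := ha.ne'
  have hN0ne : (N₀:ℝ) ≠ 0 := hb.ne'
  have hden' : (N₁:ℝ) * (1 - (N₁:ℝ) / ((N₁:ℝ) + (N₀:ℝ))) ^ 2
      + (N₀:ℝ) * (0 - (N₁:ℝ) / ((N₁:ℝ) + (N₀:ℝ))) ^ 2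
      = (N₁:ℝ) * (N₀:ℝ) / ((N₁:ℝ) + (N₀:ℝ)) := by
    field_simp
    ring
  rw [hden']
  field_simp
  ring
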